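/- Let p \ne 0, and a_1,...,a_m, q_1,...,q_m satisfy \sum a_k = 0 and c_1 := \sum a_k q_k \ne 0. Let w(t) with constant term 1 satisfy F(t) = \sum_{k=1}^m a_k w(t)^{-q_k/p}, where F has zero constant term and nonzero linear coefficient, and define \lambda_n(s) by w(t)^s = \sum_{n\ge 0} \lambda_n(s) F(t)^n. Then (n+1) c_1 \lambda_{n+1}(s) = -ps \lambda_n(s) - \sum_{k=1}^m a_k q_k \sum_{i=1}^n \lambda_{n+1-i}(-q_k/p) \cdot i \cdot \lambda_i(s). -/

import Mathlib

open PowerSeries Finset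
noncomputable section

/-- Coefficient-wise composition `f ∘ g` of formal power series; this agrees with the
usual composition when `g` has zero constant term. -/
def scomp (f g : PowerSeries ℂ) : PowerSeries ℂ :=
  PowerSeries.mk fun N => ∑ n ∈ Finset.range (N + 1),
    (PowerSeries.coeff n f) * (PowerSeries.coeff N (g ^ n))

/-- The exponential series `∑ t^n/n!`. -/
def expS : PowerSeries ℂ := PowerSeries.mk fun n => 1 / (n.factorial : ℂ)

/-- The series `log(1+t) = ∑_{n≥1} (-1)^{n+1} t^n / n`. -/
def logS : PowerSeries ℂ := PowerSeries.mk fun n => if n = 0 then 0 else (-1) ^ (n + 1) / (n : ℂ)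

/-- Complex power `φ^q := exp (q · log φ)`, well defined when `φ` has constant term 1. -/
def cpow (φ : PowerSeries ℂ) (q : ℂ) : PowerSeries ℂ :=
  scomp expS (q • scomp logS (φ - 1))

/-- Formal derivative. -/
def D (f : PowerSeries ℂ) : PowerSeries ℂ :=
  PowerSeries.mk fun n => ((n + 1 : ℕ) : ℂ) * PowerSeries.coeff (n + 1) f

/-- Generalized binomial coefficient `binom(t, k) = t(t-1)⋯(t-k+1)/k!`. -/
def gbinom (t : ℂ) (k : ℕ) : ℂ := (∏ j ∈ Finset.range k, (t - j)) / (k.factorial : ℂ)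

/-- The ordinary Bell polynomial `B_{n,k}(x_1, …, x_{n-k+1})`. -/
def ordBell (n k : ℕ) (x : ℕ → ℂ) : ℂ :=
  ∑ i : Fin (n - k + 1) → Fin (n + 1),
    if (∑ j, (i j : ℕ)) = k ∧ (∑ j, (j.1 + 1) * (i j : ℕ)) = n then
      ((k.factorial : ℂ) / ∏ j, ((i j : ℕ).factorial : ℂ)) * ∏ j, x (j.1 + 1) ^ (i j : ℕ)
    else 0

namespace Stmt7Aux

lemma coeff_pow_zero {F : PowerSeries ℂ} (hF : PowerSeries.constantCoeff F = 0) :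
    ∀ {n N : ℕ}, N < n → PowerSeries.coeff N (F ^ n) = 0 := by
  intro n
  induction n with
  | zero => intro N h; exact absurd h (Nat.not_lt_zero N)
  | succ n ih =>
    intro N h
    rw [pow_succ, PowerSeries.coeff_mul]
    refine Finset.sum_eq_zero fun x hx => ?_
    rw [Finset.HasAntidiagonal.mem_antidiagonal] at hx
    rcases Nat.eq_zero_or_pos x.2 with h2 | h2
    · rw [h2, PowerSeries.coeff_zero_eq_constantCoeff, hF, mul_zero]
    · rw [ih (show x.1 < n by omega), zero_mul]

lemma coeff_pow_self {F : PowerSeries ℂ} (hF : PowerSeries.constantCoeff F = 0) (N : ℕ) :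
    PowerSeries.coeff N (F ^ N) = (PowerSeries.coeff 1 F) ^ N := by
  induction N with
  | zero => simp
  | succ N ih =>
    rw [pow_succ, PowerSeries.coeff_mul, Finset.sum_eq_single (N, 1)]
    · rw [ih, pow_succ]
    · intro b hb hne
      rw [Finset.HasAntidiagonal.mem_antidiagonal] at hb
      rcases lt_trichotomy b.1 N with h | h | h
      · rw [coeff_pow_zero hF h, zero_mul]
      · exact absurd (Prod.ext h (by omega)) hne
      · have hb2 : b.2 = 0 := by omega
        rw [hb2, PowerSeries.coeff_zero_eq_constantCoeff, hF, mul_zero]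
    · intro hmem
      simp [Finset.mem_antidiagonal] at hmem

lemma coeff_aeval {F : PowerSeries ℂ} (hF : PowerSeries.constantCoeff F = 0)
    (φ : Polynomial ℂ) (N : ℕ) :
    PowerSeries.coeff N (Polynomial.aeval F φ) =
      ∑ n ∈ Finset.range (N + 1), φ.coeff n * PowerSeries.coeff N (F ^ n) := by
  have hdeg : φ.natDegree < max (φ.natDegree + 1) (N + 1) := lt_of_lt_of_le (Nat.lt_succ_self _) (le_max_left _ _)
  rw [Polynomial.aeval_eq_sum_range' hdeg, map_sum]
  simp_rw [LinearMap.map_smul, smul_eq_mul]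
  symm
  apply Finset.sum_subset
  · exact Finset.range_subset_range.mpr (le_max_right _ _)
  · intro x _ hx
    rw [Finset.mem_range, not_lt] at hx
    rw [coeff_pow_zero hF (by omega), mul_zero]

lemma coeff_scomp (f F : PowerSeries ℂ) (N : ℕ) :
    PowerSeries.coeff N (scomp f F) =
      ∑ n ∈ Finset.range (N + 1), PowerSeries.coeff n f * PowerSeries.coeff N (F ^ n) := by
  simp [scomp, PowerSeries.coeff_mk]

lemma coeff_scomp_aeval {F : PowerSeries ℂ} (hF : PowerSeries.constantCoeff F = 0)
    (f : PowerSeries ℂ) {N M : ℕ} (h : N < M) :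
    PowerSeries.coeff N (scomp f F) =
      PowerSeries.coeff N (Polynomial.aeval F (PowerSeries.trunc M f)) := by
  rw [coeff_aeval hF, coeff_scomp]
  refine Finset.sum_congr rfl fun n hn => ?_
  rw [Finset.mem_range] at hn
  rw [PowerSeries.coeff_trunc, if_pos (by omega)]

lemma coeff_mul_congr {A A' B B' : PowerSeries ℂ} {N : ℕ}
    (hA : ∀ j ≤ N, PowerSeries.coeff j A = PowerSeries.coeff j A')
    (hB : ∀ j ≤ N, PowerSeries.coeff j B = PowerSeries.coeff j B') :
    PowerSeries.coeff N (A * B) = PowerSeries.coeff N (A' * B') := by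
  rw [PowerSeries.coeff_mul, PowerSeries.coeff_mul]
  refine Finset.sum_congr rfl fun x hx => ?_
  rw [Finset.HasAntidiagonal.mem_antidiagonal] at hx
  rw [hA x.1 (by omega), hB x.2 (by omega)]

lemma scomp_mul {f g F : PowerSeries ℂ} (hF : PowerSeries.constantCoeff F = 0) :
    scomp (f * g) F = scomp f F * scomp g F := by
  ext N
  calc PowerSeries.coeff N (scomp (f * g) F)
      = ∑ n ∈ Finset.range (N + 1), PowerSeries.coeff n (f * g) * PowerSeries.coeff N (F ^ n) :=
        coeff_scomp _ _ _
    _ = ∑ n ∈ Finset.range (N + 1),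
          (PowerSeries.trunc (N + 1) f * PowerSeries.trunc (N + 1) g).coeff n *
            PowerSeries.coeff N (F ^ n) := by
        refine Finset.sum_congr rfl fun n hn => ?_
        rw [Finset.mem_range] at hn
        congr 1
        rw [PowerSeries.coeff_mul, Polynomial.coeff_mul]
        refine Finset.sum_congr rfl fun x hx => ?_
        rw [Finset.HasAntidiagonal.mem_antidiagonal] at hx
        rw [PowerSeries.coeff_trunc, PowerSeries.coeff_trunc, if_pos (by omega), if_pos (by omega)]
    _ = PowerSeries.coeff N
          (Polynomial.aeval F (PowerSeries.trunc (N + 1) f * PowerSeries.trunc (N + 1) g)) :=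
        (coeff_aeval hF _ _).symm
    _ = PowerSeries.coeff N
          (Polynomial.aeval F (PowerSeries.trunc (N + 1) f) *
            Polynomial.aeval F (PowerSeries.trunc (N + 1) g)) := by rw [map_mul]
    _ = PowerSeries.coeff N (scomp f F * scomp g F) :=
        coeff_mul_congr
          (fun j hj => (coeff_scomp_aeval hF f (by omega)).symm)
          (fun j hj => (coeff_scomp_aeval hF g (by omega)).symm)

lemma scomp_zero (F : PowerSeries ℂ) : scomp 0 F = 0 := by
  ext N; simp [coeff_scomp]

lemma scomp_add (f g F : PowerSeries ℂ) : scomp (f + g) F = scomp f F + scomp g F := by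
  ext N; simp [coeff_scomp, add_mul, Finset.sum_add_distrib]

lemma scomp_smul (c : ℂ) (f F : PowerSeries ℂ) : scomp (c • f) F = c • scomp f F := by
  ext N; simp [coeff_scomp, Finset.mul_sum, mul_assoc]

lemma scomp_sum {ι : Type*} (t : Finset ι) (f : ι → PowerSeries ℂ) (F : PowerSeries ℂ) :
    scomp (∑ k ∈ t, f k) F = ∑ k ∈ t, scomp (f k) F := by
  classical
  induction t using Finset.induction with
  | empty => simp [scomp_zero]
  | insert _ _ h ih => rw [Finset.sum_insert h, Finset.sum_insert h, scomp_add, ih]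

lemma scomp_one (F : PowerSeries ℂ) : scomp 1 F = 1 := by
  ext N
  rw [coeff_scomp, Finset.sum_eq_single 0]
  · simp
  · intro n hn hne
    rw [PowerSeries.coeff_one, if_neg hne, zero_mul]
  · intro h; exact absurd (Finset.mem_range.mpr (Nat.succ_pos N)) h

lemma scomp_X {F : PowerSeries ℂ} (hF : PowerSeries.constantCoeff F = 0) :
    scomp PowerSeries.X F = F := by
  ext N
  rw [coeff_scomp]
  rcases Nat.eq_zero_or_pos N with h | h
  · subst h
    simp [PowerSeries.coeff_zero_eq_constantCoeff, hF]
  · rw [Finset.sum_eq_single 1]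
    · simp
    · intro n hn hne
      rw [PowerSeries.coeff_X, if_neg hne, zero_mul]
    · intro hmem
      exact absurd (Finset.mem_range.mpr (by omega)) hmem

lemma D_eq (f : PowerSeries ℂ) : D f = PowerSeries.derivative ℂ f := by
  ext n
  rw [PowerSeries.coeff_derivative]
  simp [D, PowerSeries.coeff_mk, mul_comm]

lemma D_add (f g : PowerSeries ℂ) : D (f + g) = D f + D g := by
  simp [D_eq, map_add]

lemma D_smul (c : ℂ) (f : PowerSeries ℂ) : D (c • f) = c • D f := by
  simp [D_eq, map_smul]

lemma D_one : D (1 : PowerSeries ℂ) = 0 := by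
  simp [D_eq]

lemma D_sub (f g : PowerSeries ℂ) : D (f - g) = D f - D g := by
  simp [D_eq, map_sub]

lemma D_sum {ι : Type*} (t : Finset ι) (f : ι → PowerSeries ℂ) :
    D (∑ k ∈ t, f k) = ∑ k ∈ t, D (f k) := by
  classical
  induction t using Finset.induction with
  | empty => simp [D_eq]
  | insert _ _ h ih => rw [Finset.sum_insert h, Finset.sum_insert h, D_add, ih]

lemma D_aeval (F : PowerSeries ℂ) (φ : Polynomial ℂ) :
    D (Polynomial.aeval F φ) = Polynomial.aeval F (Polynomial.derivative φ) * D F := by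
  induction φ using Polynomial.induction_on' with
  | add p q hp hq => rw [map_add, D_add, hp, hq, map_add, map_add, add_mul]
  | monomial n a =>
    rw [Polynomial.aeval_monomial, Polynomial.derivative_monomial, Polynomial.aeval_monomial]
    cases n with
    | zero =>
      simp [D_eq, Derivation.leibniz, Derivation.map_algebraMap]
    | succ n =>
      rw [D_eq, Derivation.leibniz, Derivation.map_algebraMap, Derivation.leibniz_pow]
      simp only [smul_zero, add_zero, smul_eq_mul, Nat.add_sub_cancel, map_mul, map_natCast]
      push_cast
      rw [← D_eq]
      ring

lemma D_scomp {g F : PowerSeries ℂ} (hF : PowerSeries.constantCoeff F = 0) :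
    D (scomp g F) = scomp (D g) F * D F := by
  ext N
  have hL : PowerSeries.coeff N (D (scomp g F)) =
      PowerSeries.coeff N (D (Polynomial.aeval F (PowerSeries.trunc (N + 2) g))) := by
    simp only [D, PowerSeries.coeff_mk]
    rw [coeff_scomp_aeval hF g (show N + 1 < N + 2 by omega)]
  rw [hL, D_aeval]
  refine (coeff_mul_congr (fun j hj => ?_) (fun j hj => rfl))
  rw [coeff_aeval hF, coeff_scomp]
  refine Finset.sum_congr rfl fun n hn => ?_
  rw [Finset.mem_range] at hn
  rw [Polynomial.coeff_derivative, PowerSeries.coeff_trunc, if_pos (by omega)]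
  simp [D, PowerSeries.coeff_mk, mul_comm]

lemma scomp_eq_zero {g F : PowerSeries ℂ} (hF0 : PowerSeries.constantCoeff F = 0)
    (hF1 : PowerSeries.coeff 1 F ≠ 0) (h : scomp g F = 0) : g = 0 := by
  ext N
  induction N using Nat.strong_induction_on with
  | _ N ih =>
    have h0 : PowerSeries.coeff N (scomp g F) = 0 := by rw [h, map_zero]
    rw [coeff_scomp, Finset.sum_range_succ] at h0
    have hz : ∑ n ∈ Finset.range N, PowerSeries.coeff n g * PowerSeries.coeff N (F ^ n) = 0 := by
      refine Finset.sum_eq_zero fun n hn => ?_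
      rw [Finset.mem_range] at hn
      have := ih n hn
      rw [map_zero] at this
      rw [this, zero_mul]
    rw [hz, zero_add, coeff_pow_self hF0] at h0
    rw [map_zero]
    exact (mul_eq_zero.mp h0).resolve_right (pow_ne_zero _ hF1)

lemma D_expS : D expS = expS := by
  ext n
  simp only [D, expS, PowerSeries.coeff_mk]
  rw [Nat.factorial_succ]
  have h1 : ((n + 1 : ℕ) : ℂ) ≠ 0 := Nat.cast_ne_zero.mpr (Nat.succ_ne_zero n)
  have h2 : ((n.factorial : ℕ) : ℂ) ≠ 0 := Nat.cast_ne_zero.mpr (Nat.factorial_ne_zero n)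
  have h1' : (n : ℂ) + 1 ≠ 0 := by exact_mod_cast h1
  push_cast
  rw [one_div, mul_inv, ← mul_assoc, mul_inv_cancel₀ h1', one_mul, one_div]

/-- The geometric series `1/(1+t)`. -/
def G : PowerSeries ℂ := PowerSeries.mk fun n => (-1 : ℂ) ^ n

lemma D_logS : D logS = G := by
  ext n
  simp only [D, logS, G, PowerSeries.coeff_mk, if_neg (Nat.succ_ne_zero n)]
  have h1 : ((n + 1 : ℕ) : ℂ) ≠ 0 := Nat.cast_ne_zero.mpr (Nat.succ_ne_zero n)
  have h1' : (n : ℂ) + 1 ≠ 0 := by exact_mod_cast h1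
  push_cast
  rw [mul_comm, div_mul_cancel₀ _ h1', pow_succ, pow_succ]
  ring

lemma one_add_X_mul_G : ((1 : PowerSeries ℂ) + PowerSeries.X) * G = 1 := by
  ext N
  rw [add_mul, one_mul, map_add]
  cases N with
  | zero =>
    simp [G, PowerSeries.coeff_zero_eq_constantCoeff, PowerSeries.constantCoeff_X]
  | succ N =>
    rw [PowerSeries.coeff_succ_X_mul]
    simp [G, PowerSeries.coeff_mk, PowerSeries.coeff_one, pow_succ]

lemma sum_Icc_one (n : ℕ) (f : ℕ → ℂ) :
    ∑ i ∈ Finset.Icc 1 n, f i = ∑ i ∈ Finset.range n, f (1 + i) := by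
  rw [← Finset.Ico_add_one_right_eq_Icc, Finset.sum_Ico_eq_sum_range]
  simp

end Stmt7Aux

open Stmt7Aux

/-- The recurrence `(n+1) c₁ λ_{n+1}(s) = -ps λ_n(s)
- ∑_k a_k q_k ∑_{i=1}^n λ_{n+1-i}(-q_k/p) · i · λ_i(s)`. -/
theorem stmt7 (m : ℕ) (hm : 1 ≤ m) (p : ℂ) (hp : p ≠ 0) (a q : ℕ → ℂ)
    (hsum : ∑ k ∈ Finset.Icc 1 m, a k = 0)
    (hc1 : ∑ k ∈ Finset.Icc 1 m, a k * q k ≠ 0)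
    (w F : PowerSeries ℂ) (hw : PowerSeries.constantCoeff w = 1)
    (hFdef : F = ∑ k ∈ Finset.Icc 1 m, a k • cpow w (-(q k) / p))
    (hF0 : PowerSeries.constantCoeff F = 0) (hF1 : PowerSeries.coeff 1 F ≠ 0)
    (lam : ℕ → ℂ → ℂ) (hlam0 : ∀ s : ℂ, lam 0 s = 1)
    (hlam : ∀ (s : ℂ) (N : ℕ), PowerSeries.coeff N (cpow w s) =
      ∑ n ∈ Finset.range (N + 1), lam n s * PowerSeries.coeff N (F ^ n)) :
    ∀ (n : ℕ) (s : ℂ),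
      ((n : ℂ) + 1) * (∑ k ∈ Finset.Icc 1 m, a k * q k) * lam (n + 1) s =
        -(p * s) * lam n s -
          ∑ k ∈ Finset.Icc 1 m, a k * q k *
            ∑ i ∈ Finset.Icc 1 n, lam (n + 1 - i) (-(q k) / p) * (i : ℂ) * lam i s := by
  have hw1 : PowerSeries.constantCoeff (w - 1) = 0 := by
    rw [map_sub, hw, map_one, sub_self]
  have hL0 : PowerSeries.coeff 0 (scomp logS (w - 1)) = 0 := by
    rw [coeff_scomp]
    simp [logS, PowerSeries.coeff_mk]
  have hu0 : ∀ t : ℂ, PowerSeries.constantCoeff (t • scomp logS (w - 1)) = 0 := by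
    intro t
    rw [← PowerSeries.coeff_zero_eq_constantCoeff_apply, map_smul, hL0, smul_zero]
  -- the inverse of w
  have hwinv : w * scomp G (w - 1) = 1 := by
    have h1 : scomp (1 + PowerSeries.X) (w - 1) * scomp G (w - 1) = 1 := by
      rw [← scomp_mul hw1, one_add_X_mul_G, scomp_one]
    rw [scomp_add, scomp_one, scomp_X hw1] at h1
    have h2 : (1 : PowerSeries ℂ) + (w - 1) = w := by ring
    rwa [h2] at h1
  -- derivative of cpow
  have Dcpow : ∀ t : ℂ, w * D (cpow w t) = PowerSeries.C t * (D w * cpow w t) := by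
    intro t
    unfold cpow
    rw [D_scomp (hu0 t), D_expS, D_smul, D_scomp hw1, D_logS, D_sub, D_one, sub_zero,
      PowerSeries.smul_eq_C_mul (scomp G (w - 1) * D w) t]
    linear_combination (PowerSeries.C t * scomp expS (t • scomp logS (w - 1)) * D w) * hwinv
  -- Λ
  set Λ : ℂ → PowerSeries ℂ := fun t => PowerSeries.mk fun i => lam i t with hΛdef
  have hΛco : ∀ (i : ℕ) (t : ℂ), PowerSeries.coeff i (Λ t) = lam i t := by
    intro i t; simp [hΛdef, PowerSeries.coeff_mk]
  have hcp : ∀ t : ℂ, cpow w t = scomp (Λ t) F := by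
    intro t
    ext N
    rw [hlam t N, coeff_scomp]
    exact Finset.sum_congr rfl fun i _ => by rw [hΛco]
  -- the linear coefficient of w is nonzero
  have hcoeff1 : ∀ t : ℂ, PowerSeries.coeff 1 (cpow w t) = t * PowerSeries.coeff 1 w := by
    intro t
    have hin : PowerSeries.coeff 1 (scomp logS (w - 1)) = PowerSeries.coeff 1 w := by
      rw [coeff_scomp, Finset.sum_range_succ, Finset.sum_range_one]
      simp [logS, PowerSeries.coeff_mk, PowerSeries.coeff_one]
    unfold cpow
    rw [coeff_scomp, Finset.sum_range_succ, Finset.sum_range_one]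
    simp [expS, PowerSeries.coeff_mk, PowerSeries.coeff_one, map_smul, hin]
  have hw1' : PowerSeries.coeff 1 w ≠ 0 := by
    intro hz
    apply hF1
    rw [hFdef, map_sum]
    refine Finset.sum_eq_zero fun k hk => ?_
    rw [map_smul, hcoeff1, hz, mul_zero, smul_zero]
  have hDw : D w ≠ 0 := by
    intro h
    apply hw1'
    have h0 := congrArg (PowerSeries.coeff 0) h
    simpa [D, PowerSeries.coeff_mk] using h0
  -- the derivative of F
  have hDF : PowerSeries.C p * (w * D F) =
      -(D w * ∑ k ∈ Finset.Icc 1 m, (a k * q k) • cpow w (-(q k) / p)) := by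
    have hterm : ∀ k : ℕ, PowerSeries.C p * (w * D (a k • cpow w (-(q k) / p)))
        = -(D w * ((a k * q k) • cpow w (-(q k) / p))) := by
      intro k
      rw [D_smul, PowerSeries.smul_eq_C_mul, PowerSeries.smul_eq_C_mul]
      have h := Dcpow (-(q k) / p)
      have hC : PowerSeries.C p * PowerSeries.C (-(q k) / p) * PowerSeries.C (a k)
          = -PowerSeries.C (a k * q k) := by
        rw [← map_mul, ← map_mul, ← map_neg]
        congr 1
        field_simp
      linear_combination PowerSeries.C (a k) * PowerSeries.C p * h +
        (D w * cpow w (-(q k) / p)) * hC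
    calc PowerSeries.C p * (w * D F)
        = ∑ k ∈ Finset.Icc 1 m, PowerSeries.C p * (w * D (a k • cpow w (-(q k) / p))) := by
          rw [hFdef, D_sum]
          simp only [Finset.mul_sum]
      _ = ∑ k ∈ Finset.Icc 1 m, -(D w * ((a k * q k) • cpow w (-(q k) / p))) :=
          Finset.sum_congr rfl fun k _ => hterm k
      _ = -(D w * ∑ k ∈ Finset.Icc 1 m, (a k * q k) • cpow w (-(q k) / p)) := by
          rw [Finset.mul_sum, Finset.sum_neg_distrib]
  -- main power-series identity
  have hmain : ∀ s : ℂ, PowerSeries.C (p * s) * cpow w s +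
      scomp (D (Λ s)) F * (∑ k ∈ Finset.Icc 1 m, (a k * q k) • cpow w (-(q k) / p)) = 0 := by
    intro s
    have hchain : D (cpow w s) = scomp (D (Λ s)) F * D F := by
      rw [hcp s, D_scomp hF0]
    have h2 : PowerSeries.C p * (PowerSeries.C s * (D w * cpow w s)) =
        scomp (D (Λ s)) F * (PowerSeries.C p * (w * D F)) := by
      rw [← Dcpow s, hchain]
      ring
    rw [hDF] at h2
    have e1 : D w * (PowerSeries.C (p * s) * cpow w s +
        scomp (D (Λ s)) F * (∑ k ∈ Finset.Icc 1 m, (a k * q k) • cpow w (-(q k) / p))) = 0 := by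
      rw [map_mul]
      linear_combination h2
    exact (mul_eq_zero.mp e1).resolve_left hDw
  -- push everything through scomp and use injectivity
  set Ψ : PowerSeries ℂ := ∑ k ∈ Finset.Icc 1 m, (a k * q k) • Λ (-(q k) / p) with hΨdef
  have hHs : (∑ k ∈ Finset.Icc 1 m, (a k * q k) • cpow w (-(q k) / p)) = scomp Ψ F := by
    rw [hΨdef, scomp_sum]
    refine Finset.sum_congr rfl fun k _ => ?_
    rw [scomp_smul, hcp]
  have hser : ∀ s : ℂ, (p * s) • Λ s + D (Λ s) * Ψ = 0 := by
    intro s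
    apply scomp_eq_zero hF0 hF1
    rw [scomp_add, scomp_smul, scomp_mul hF0, PowerSeries.smul_eq_C_mul, ← hcp s, ← hHs]
    exact hmain s
  -- extract coefficients
  intro n s
  have hDco : ∀ (i : ℕ) (t : ℂ),
      PowerSeries.coeff i (D (Λ t)) = ((i + 1 : ℕ) : ℂ) * lam (i + 1) t := by
    intro i t; simp [D, hΛdef, PowerSeries.coeff_mk]
  have hΨco : ∀ j : ℕ, PowerSeries.coeff j Ψ =
      ∑ k ∈ Finset.Icc 1 m, a k * q k * lam j (-(q k) / p) := by
    intro j
    rw [hΨdef, map_sum]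
    refine Finset.sum_congr rfl fun k _ => ?_
    rw [map_smul, smul_eq_mul, hΛco]
  have hΨ0 : PowerSeries.coeff 0 Ψ = ∑ k ∈ Finset.Icc 1 m, a k * q k := by
    rw [hΨco]
    exact Finset.sum_congr rfl fun k _ => by rw [hlam0, mul_one]
  have hco := congrArg (PowerSeries.coeff n) (hser s)
  rw [map_zero, map_add, map_smul, smul_eq_mul, hΛco, PowerSeries.coeff_mul,
    Finset.Nat.sum_antidiagonal_eq_sum_range_succ_mk, Finset.sum_range_succ,
    Nat.sub_self, hDco n s, hΨ0] at hco
  -- rewrite the goal's double sum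
  have hR : ∑ k ∈ Finset.Icc 1 m, a k * q k *
        ∑ i ∈ Finset.Icc 1 n, lam (n + 1 - i) (-(q k) / p) * (i : ℂ) * lam i s
      = ∑ i ∈ Finset.range n, PowerSeries.coeff i (D (Λ s)) *
          PowerSeries.coeff (n - i) Ψ := by
    simp_rw [Finset.mul_sum]
    rw [Finset.sum_comm, sum_Icc_one]
    refine Finset.sum_congr rfl fun j hj => ?_
    rw [Finset.mem_range] at hj
    rw [hDco, hΨco, Finset.mul_sum]
    refine Finset.sum_congr rfl fun k _ => ?_
    have h1 : n + 1 - (1 + j) = n - j := by omega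
    rw [h1]
    push_cast [Nat.succ_le_of_lt hj, Nat.sub_add_cancel]
    ring
  rw [hR]
  push_cast at hco ⊢
  linear_combination hco
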